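/- arXiv:1307.0465 — 2 statements merged into one kernel-verified Lean document; each statement's English description precedes it below -/
import Mathlib

section
/- The Grassmann integral is invariant under a unitary change of generators: if b = U a where U is a unitary 2|M| × 2|M| matrix relating two sets of generators written as 2|M|-component vectors, then the corresponding derivation vectors transform as δ/δb = Ū δ/δa, and for any μ ∈ G_M the integral of μ with respect to the new generators equals the integral with respect to the old generators. -/
open Finset Matrix
open scoped Classical ComplexOrder Kronecker

noncomputable section

namespace Grassmann

/-- Coefficient model of the Grassmann algebra over ℂ with generators indexed by a
linearly ordered finite type `ι`: an element is given by its coefficients in the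
basis of increasingly ordered monomials, indexed by `Finset ι`. -/
abbrev Car (ι : Type) := Finset ι → ℂ

variable {ι κ : Type} [LinearOrder ι] [LinearOrder κ]

/-- The unit (empty monomial). -/
def gone : Car ι := fun s => if s = ∅ then 1 else 0

/-- The sign produced when concatenating two increasing monomials. -/
def mulSign (s t : Finset ι) : ℂ :=
  (-1) ^ ((s ×ˢ t).filter fun p => p.2 < p.1).card

/-- The (ordinary, anticommutative) Grassmann product. -/
def gmul (f g : Car ι) : Car ι := fun u =>
  ∑ s ∈ u.powerset, mulSign s (u \ s) * f s * g (u \ s)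

/-- A generator of the Grassmann algebra. -/
def gen (x : ι) : Car ι := fun s => if s = {x} then 1 else 0

/-- Product of a list of Grassmann elements. -/
def lprod : List (Car ι) → Car ι := fun l => l.foldr gmul gone

/-- Powers with respect to the Grassmann product. -/
def gpow (f : Car ι) : ℕ → Car ι
  | 0 => gone
  | n + 1 => gmul f (gpow f n)

/-- The left derivation `δ/δx`. -/
def gderiv (x : ι) (f : Car ι) : Car ι := fun t =>
  if x ∈ t then 0
  else (-1) ^ (t.filter fun y => y < x).card * f (insert x t)

/-- The exponential of a Grassmann element (a finite sum by nilpotency). -/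
def gexp [Fintype ι] (f : Car ι) : Car ι :=
  ∑ m ∈ Finset.range (2 * Fintype.card ι + 1), ((Nat.factorial m : ℂ)⁻¹) • gpow f m

/-- The sign produced when relabelling generators along an injection. -/
def relabelSign (g : ι ↪ κ) (s : Finset ι) : ℂ :=
  (-1) ^ ((s ×ˢ s).filter fun p => p.1 < p.2 ∧ g p.2 < g p.1).card

/-- The algebra homomorphism induced by relabelling generators along an injection. -/
def relabel [Fintype ι] (g : ι ↪ κ) (f : Car ι) : Car κ := fun t =>
  ∑ s : Finset ι, if s.map g = t then relabelSign g s * f s else 0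

variable (M : Type) [Fintype M] [LinearOrder M]

/-- Index type for the generators `ψ̄ᵢ` (`true`) and `ψᵢ` (`false`). -/
abbrev Idx := Bool ×ₗ M

instance : Fintype (Idx M) := inferInstanceAs (Fintype (Bool × M))

/-- The generator `ψᵢ`. -/
def psi (i : M) : Car (Idx M) := gen (toLex (false, i))

/-- The generator `ψ̄ᵢ`. -/
def psibar (i : M) : Car (Idx M) := gen (toLex (true, i))

/-- The elements of a finite set in increasing order. -/
def msort (s : Finset M) : List M := s.sort (· ≤ ·)

/-- `Ψ_J = ψ_{j₁} ⋯ ψ_{j_n}` for the ordered set `J`. -/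
def psiProd (J : Finset M) : Car (Idx M) := lprod ((msort M J).map (psi M))

/-- `Ψ̄_I = ψ̄_{i₁} ⋯ ψ̄_{i_m}` for the ordered set `I`. -/
def psibarProd (I : Finset M) : Car (Idx M) := lprod ((msort M I).map (psibar M))

/-- The normal-ordered monomial `Ψ̄_I Ψ_J`. -/
def nmono (I J : Finset M) : Car (Idx M) := gmul (psibarProd M I) (psiProd M J)

/-- The Grassmann integral `∫ d(Ψ̄,Ψ) = ∏_{α∈M} δ/δψ̄_α δ/δψ_α`. -/
def gintegral (f : Car (Idx M)) : ℂ :=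
  ((msort M univ).foldr
    (fun i g => gderiv (toLex (true, i)) (gderiv (toLex (false, i)) g)) f) ∅

/-- The pairing `(Ψ̄,Ψ) = ∑ᵢ ψ̄ᵢ ψᵢ`. -/
def pairPsi : Car (Idx M) := ∑ i : M, gmul (psibar M i) (psi M i)

/-- The weight `e^{2(Ψ̄,Ψ)} = ∏_α (1 + 2 ψ̄_α ψ_α)`. -/
def weight : Car (Idx M) :=
  lprod ((msort M univ).map fun i => gone + (2 : ℂ) • gmul (psibar M i) (psi M i))

/-- The weighted Grassmann integral `∫ 𝒟(Ψ̄,Ψ) = ∫ d(Ψ̄,Ψ) e^{2(Ψ̄,Ψ)}`. -/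
def wintegral (f : Car (Idx M)) : ℂ := gintegral M (gmul (weight M) f)

/-- Index type for the doubled algebra in the variables `ψ̄, ψ` (family `false`)
and `φ̄, φ` (family `true`). -/
abbrev BIdx := Bool ×ₗ (Idx M)

instance : Fintype (BIdx M) := inferInstanceAs (Fintype (Bool × (Bool × M)))

/-- The (order-preserving) embedding of the `ψ`-variables into the doubled algebra. -/
def embPsi : Idx M ↪ BIdx M :=
  ⟨fun x => toLex (false, x), fun a b h => congrArg (fun z : BIdx M => (ofLex z).2) h⟩

/-- Substitution `μ(ψ̄,ψ) ↦ μ(ψ̄,φ)`. -/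
def subMu : Idx M ↪ BIdx M :=
  ⟨fun x => toLex (!(ofLex x).1, x), fun a b h => congrArg (fun z : BIdx M => (ofLex z).2) h⟩

/-- Substitution `η(ψ̄,ψ) ↦ η(φ̄,ψ)`. -/
def subEta : Idx M ↪ BIdx M :=
  ⟨fun x => toLex ((ofLex x).1, x), fun a b h => congrArg (fun z : BIdx M => (ofLex z).2) h⟩

/-- Generator `ψᵢ` in the doubled algebra. -/
def psiB (i : M) : Car (BIdx M) := gen (toLex (false, toLex (false, i)))
/-- Generator `ψ̄ᵢ` in the doubled algebra. -/
def psibarB (i : M) : Car (BIdx M) := gen (toLex (false, toLex (true, i)))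
/-- Generator `φᵢ` in the doubled algebra. -/
def phiB (i : M) : Car (BIdx M) := gen (toLex (true, toLex (false, i)))
/-- Generator `φ̄ᵢ` in the doubled algebra. -/
def phibarB (i : M) : Car (BIdx M) := gen (toLex (true, toLex (true, i)))

/-- Pairing `(Ā,B) = ∑ᵢ āᵢ bᵢ` in the doubled algebra. -/
def pairB (f g : M → Car (BIdx M)) : Car (BIdx M) := ∑ i : M, gmul (f i) (g i)

/-- The kernel `e^{-(Ψ̄,Ψ)} e^{(Ψ̄,Φ)} e^{-(Φ̄,Φ)} e^{(Φ̄,Ψ)}`. -/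
def kernel : Car (BIdx M) :=
  gmul (gexp (-(pairB M (psibarB M) (psiB M))))
    (gmul (gexp (pairB M (psibarB M) (phiB M)))
      (gmul (gexp (-(pairB M (phibarB M) (phiB M))))
        (gexp (pairB M (phibarB M) (psiB M)))))

/-- Integration over the `φ` variables, `∫ d(Φ̄,Φ)`. -/
def intPhi (f : Car (BIdx M)) : Car (BIdx M) :=
  ((msort M univ).foldr
    (fun i g => gderiv (toLex (true, toLex (true, i)))
      (gderiv (toLex (true, toLex (false, i))) g)) f)

/-- Reading off the result (in the `ψ` variables only) after `φ`-integration. -/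
def projBack (f : Car (BIdx M)) : Car (Idx M) := fun s => f (s.map (embPsi M))

/-- The star product
`(μ⋆η)(ψ̄,ψ) = ∫ d(Φ̄,Φ) μ(ψ̄,φ) η(φ̄,ψ) e^{-(Ψ̄,Ψ)} e^{(Ψ̄,Φ)} e^{-(Φ̄,Φ)} e^{(Φ̄,Ψ)}`. -/
def gstar (μ η : Car (Idx M)) : Car (Idx M) :=
  projBack M (intPhi M
    (gmul (relabel (subMu M) μ) (gmul (relabel (subEta M) η) (kernel M))))

/-- Star product of a list. -/
def lstar (l : List (Car (Idx M))) : Car (Idx M) := l.foldr (gstar M) (gone)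

/-- Swapping `ψᵢ ↔ ψ̄ᵢ`. -/
def barSwap : Idx M → Idx M := fun x => toLex (!(ofLex x).1, (ofLex x).2)

/-- The sign of the involution on a basis monomial. -/
def involSign (s : Finset (Idx M)) : ℂ :=
  (-1) ^ ((s ×ˢ s).filter fun p => p.1 < p.2 ∧ barSwap M p.1 < barSwap M p.2).card

/-- The involution `*` of the Grassmann algebra: antilinear, `ψᵢ* = ψ̄ᵢ`, `ψ̄ᵢ* = ψᵢ`,
reversing products. -/
def ginvol (f : Car (Idx M)) : Car (Idx M) := fun t =>
  involSign M (t.image (barSwap M)) * (starRingEnd ℂ) (f (t.image (barSwap M)))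

/-! ### The fermion Fock space `∧H` and the normal-ordering map `Θ` -/

/-- The fermion Fock space over `H = ℂ^M`, in the occupation basis. -/
abbrev Fock := Finset M → ℂ

/-- The creation operator `c*ᵢ`. -/
def createL (i : M) : Fock M →ₗ[ℂ] Fock M where
  toFun f := fun s =>
    if i ∈ s then (-1) ^ (((s.erase i)).filter fun j => j < i).card * f (s.erase i) else 0
  map_add' f g := by funext s; by_cases h : i ∈ s <;> simp [h, mul_add]
  map_smul' c f := by funext s; by_cases h : i ∈ s <;> simp [h] <;> ring

/-- The annihilation operator `cᵢ`. -/
def annihL (i : M) : Fock M →ₗ[ℂ] Fock M where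
  toFun f := fun s =>
    if i ∈ s then 0 else (-1) ^ (s.filter fun j => j < i).card * f (insert i s)
  map_add' f g := by funext s; by_cases h : i ∈ s <;> simp [h, mul_add]
  map_smul' c f := by funext s; by_cases h : i ∈ s <;> simp [h] <;> ring

/-- The normal-ordered operator monomial `c*_{i₁}⋯c*_{i_m} c_{j₁}⋯c_{j_n}`
for ordered sets `I`, `J`. -/
def cOp (I J : Finset M) : Fock M →ₗ[ℂ] Fock M :=
  ((msort M I).map (createL M)).prod * ((msort M J).map (annihL M)).prod

/-- The adjoint of an operator on the Fock space. -/
def adjOp (A : Fock M →ₗ[ℂ] Fock M) : Fock M →ₗ[ℂ] Fock M :=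
  Matrix.toLin (Pi.basisFun ℂ (Finset M)) (Pi.basisFun ℂ (Finset M))
    ((LinearMap.toMatrix (Pi.basisFun ℂ (Finset M)) (Pi.basisFun ℂ (Finset M)) A).conjTranspose)

/-! ### Density matrices of a Grassmann density -/

/-- The one-particle density matrix `γ_th`, `⟨ψ_k, γ_th ψ_l⟩ = ∫𝒟 th*⋆th⋆ψ̄_l⋆ψ_k`. -/
def gammaM (th : Car (Idx M)) : Matrix M M ℂ := fun k l =>
  wintegral M (gstar M (gstar M (ginvol M th) th) (gstar M (psibar M l) (psi M k)))

/-- The two-particle density matrix `Γ_th`,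
`⟨ψ_m⊗ψ_n, Γ_th (ψ_l⊗ψ_k)⟩ = ∫𝒟 th*⋆th⋆ψ̄_k⋆ψ̄_l⋆ψ_m⋆ψ_n`. -/
def GammaM (th : Car (Idx M)) : Matrix (M × M) (M × M) ℂ := fun p q =>
  wintegral M (gstar M (gstar M (ginvol M th) th)
    (gstar M (psibar M q.2) (gstar M (psibar M q.1) (gstar M (psi M p.1) (psi M p.2)))))

/-- Positive semi-definiteness of a complex matrix: `⟨x, A x⟩ ≥ 0` for all vectors. -/
def PSDvec {n : Type} [Fintype n] (A : Matrix n n ℂ) : Prop :=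
  ∀ x : n → ℂ, 0 ≤ star x ⬝ᵥ A.mulVec x

/-- The exchange operator `Ex (f⊗g) = g⊗f` on `H⊗H`. -/
def ExM : Matrix (M × M) (M × M) ℂ := fun p q =>
  if p.1 = q.2 ∧ p.2 = q.1 then 1 else 0

end Grassmann
namespace Grassmann

/-- The new generators `b = U a`. -/
def genImage (M : Type) [Fintype M] [LinearOrder M] (U : Matrix (Idx M) (Idx M) ℂ)
    (x : Idx M) : Car (Idx M) :=
  ∑ y : Idx M, U x y • gen y

/-- Substituting the new generators `b = U a` into an element `μ`,
i.e. forming `μ(χ̄,χ)`. -/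
def subst (M : Type) [Fintype M] [LinearOrder M] (U : Matrix (Idx M) (Idx M) ℂ)
    (f : Car (Idx M)) : Car (Idx M) :=
  ∑ s : Finset (Idx M), f s • lprod ((s.sort (· ≤ ·)).map (genImage M U))

/-- The transformed derivations `δ/δb = Ū δ/δa`. -/
def newDeriv (M : Type) [Fintype M] [LinearOrder M] (U : Matrix (Idx M) (Idx M) ℂ)
    (x : Idx M) (f : Car (Idx M)) : Car (Idx M) :=
  ∑ y : Idx M, (starRingEnd ℂ) (U x y) • gderiv y f

/-- Grassmann integration with respect to the new generators,
`∏_α δ/δχ̄_α δ/δχ_α`. -/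
def newIntegral (M : Type) [Fintype M] [LinearOrder M] (U : Matrix (Idx M) (Idx M) ℂ)
    (f : Car (Idx M)) : ℂ :=
  ((msort M Finset.univ).foldr
    (fun i g => newDeriv M U (toLex (true, i)) (newDeriv M U (toLex (false, i)) g)) f) ∅

end Grassmann

namespace Grassmann
variable {ι : Type} [LinearOrder ι]

lemma neg_one_pow_mul_self (n : ℕ) : ((-1:ℂ))^n * (-1)^n = 1 := by
  rw [← pow_add]; exact Even.neg_one_pow ⟨n, rfl⟩

lemma gmul_zero_right (f : Car ι) : gmul f (0 : Car ι) = 0 := by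
  funext u; simp [gmul]

lemma gmul_zero_left (f : Car ι) : gmul (0 : Car ι) f = 0 := by
  funext u; simp [gmul]

lemma gmul_smul_right (c : ℂ) (f g : Car ι) : gmul f (c • g) = c • gmul f g := by
  funext u
  simp only [gmul, Pi.smul_apply, smul_eq_mul, Finset.mul_sum]
  exact Finset.sum_congr rfl fun s _ => by ring

lemma gmul_smul_left (c : ℂ) (f g : Car ι) : gmul (c • f) g = c • gmul f g := by
  funext u
  simp only [gmul, Pi.smul_apply, smul_eq_mul, Finset.mul_sum]
  exact Finset.sum_congr rfl fun s _ => by ring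

lemma gmul_sum_right {α : Type*} (S : Finset α) (f : Car ι) (g : α → Car ι) :
    gmul f (∑ i ∈ S, g i) = ∑ i ∈ S, gmul f (g i) := by
  funext u
  simp only [gmul, Finset.sum_apply, Finset.mul_sum]
  rw [Finset.sum_comm]

lemma gmul_sum_left {α : Type*} (S : Finset α) (f : α → Car ι) (g : Car ι) :
    gmul (∑ i ∈ S, f i) g = ∑ i ∈ S, gmul (f i) g := by
  funext u
  simp only [gmul, Finset.sum_apply, Finset.sum_mul, Finset.mul_sum]
  rw [Finset.sum_comm]

lemma gmul_neg_right (f g : Car ι) : gmul f (-g) = - gmul f g := by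
  funext u
  simp only [gmul, Pi.neg_apply, mul_neg, Finset.sum_neg_distrib]

lemma gderiv_zero (x : ι) : gderiv x (0 : Car ι) = 0 := by
  funext t; simp [gderiv]

lemma gderiv_smul (x : ι) (c : ℂ) (f : Car ι) : gderiv x (c • f) = c • gderiv x f := by
  funext t; simp only [gderiv, Pi.smul_apply, smul_eq_mul]; split <;> ring

lemma gderiv_add (x : ι) (f g : Car ι) : gderiv x (f + g) = gderiv x f + gderiv x g := by
  funext t; simp only [gderiv, Pi.add_apply]; split <;> ring

lemma gderiv_sub (x : ι) (f g : Car ι) : gderiv x (f - g) = gderiv x f - gderiv x g := by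
  funext t; simp only [gderiv, Pi.sub_apply]; split <;> ring

lemma gderiv_sum {α : Type*} (x : ι) (S : Finset α) (f : α → Car ι) :
    gderiv x (∑ i ∈ S, f i) = ∑ i ∈ S, gderiv x (f i) := by
  funext t
  simp only [gderiv, Finset.sum_apply, Finset.mul_sum]
  split
  · simp
  · rfl

lemma gone_eq : (gone : Car ι) = fun s => if s = ∅ then 1 else 0 := rfl

lemma gderiv_gone (x : ι) : gderiv x (gone : Car ι) = 0 := by
  funext t
  simp only [gderiv, gone_eq]
  split
  · rfl
  · rw [if_neg (Finset.insert_ne_empty x t), mul_zero]; rfl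

-- card of filtered insert
lemma card_filter_insert {p : ι → Prop} {x : ι} {s : Finset ι} (hx : x ∉ s) :
    ((insert x s).filter p).card = (s.filter p).card + if p x then 1 else 0 := by
  rw [Finset.filter_insert]
  split
  · rw [Finset.card_insert_of_notMem (fun h => hx (Finset.mem_of_mem_filter x h))]
  · rw [add_zero]

-- key computation: left multiplication by a generator
lemma gmul_gen (w : ι) (h : Car ι) (u : Finset ι) :
    gmul (gen w) h u =
      if w ∈ u then (-1 : ℂ) ^ ((u.erase w).filter (· < w)).card * h (u.erase w) else 0 := by
  rw [gmul]
  by_cases hw : w ∈ u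
  · rw [if_pos hw]
    rw [Finset.sum_eq_single_of_mem ({w} : Finset ι)
        (Finset.mem_powerset.mpr (Finset.singleton_subset_iff.mpr hw))
        (fun b _ hb => by simp [gen, hb])]
    have h1 : u \ {w} = u.erase w := by rw [Finset.erase_eq]
    have h2 : mulSign ({w} : Finset ι) (u.erase w) =
        (-1 : ℂ) ^ ((u.erase w).filter (· < w)).card := by
      rw [mulSign, Finset.singleton_product, Finset.filter_map, Finset.card_map]
      rfl
    rw [h1, h2, gen, if_pos rfl, mul_one]
  · rw [if_neg hw]
    apply Finset.sum_eq_zero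
    intro s hs
    have : s ≠ {w} := by
      intro h'
      exact hw (Finset.mem_powerset.mp hs (h' ▸ Finset.mem_singleton_self w))
    rw [gen, if_neg this, mul_zero, zero_mul]

end Grassmann
namespace Grassmann
variable {ι : Type} [LinearOrder ι]

lemma card_filter_insert_lt {z x : ι} {s : Finset ι} (hx : x ∉ s) :
    ((insert x s).filter (· < z)).card = (s.filter (· < z)).card + if x < z then 1 else 0 := by
  rw [Finset.filter_insert]
  split
  · rw [Finset.card_insert_of_notMem (fun h => hx (Finset.mem_of_mem_filter x h))]
  · rw [add_zero]

/-- The graded Leibniz rule for a generator factor. -/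
lemma gderiv_gmul_gen (y w : ι) (h : Car ι) :
    gderiv y (gmul (gen w) h) =
      (if y = w then h else 0) - gmul (gen w) (gderiv y h) := by
  funext t
  simp only [Pi.sub_apply]
  by_cases hyw : y = w
  · subst hyw
    rw [if_pos rfl]
    by_cases hyt : y ∈ t
    · rw [gderiv, if_pos hyt, gmul_gen, if_pos hyt, gderiv, if_neg (Finset.notMem_erase y t),
        Finset.insert_erase hyt]
      rw [← mul_assoc, neg_one_pow_mul_self, one_mul, eq_comm, sub_eq_zero]
    · rw [gderiv, if_neg hyt, gmul_gen, if_pos (Finset.mem_insert_self y t),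
        Finset.erase_insert hyt, gmul_gen, if_neg hyt, sub_zero, ← mul_assoc,
        neg_one_pow_mul_self, one_mul]
  · rw [if_neg hyw, Pi.zero_apply, zero_sub]
    by_cases hyt : y ∈ t
    · rw [gderiv, if_pos hyt, gmul_gen]
      by_cases hwt : w ∈ t
      · rw [if_pos hwt, gderiv, if_pos (Finset.mem_erase.mpr ⟨hyw, hyt⟩), mul_zero, neg_zero]
      · rw [if_neg hwt, neg_zero]
    · by_cases hwt : w ∈ t
      · have hyE : y ∉ t.erase w := fun h' => hyt (Finset.mem_of_mem_erase h')
        have hwi : w ∈ insert y t := Finset.mem_insert_of_mem hwt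
        have hset : (insert y t).erase w = insert y (t.erase w) :=
          Finset.erase_insert_of_ne (fun h' => hyw h')
        rw [gderiv, if_neg hyt, gmul_gen, if_pos hwi, hset, gmul_gen, if_pos hwt, gderiv,
          if_neg hyE]
        have hc2 : ((insert y (t.erase w)).filter (· < w)).card =
            ((t.erase w).filter (· < w)).card + if y < w then 1 else 0 :=
          card_filter_insert_lt hyE
        have hc1 : (t.filter (· < y)).card =
            ((t.erase w).filter (· < y)).card + if w < y then 1 else 0 := by
          conv_lhs => rw [← Finset.insert_erase hwt]
          exact card_filter_insert_lt (Finset.notMem_erase w t)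
        rw [hc1, hc2]
        rcases lt_or_gt_of_ne hyw with hlt | hgt
        · rw [if_pos hlt, if_neg (not_lt.mpr hlt.le)]
          ring_nf
        · rw [if_neg (not_lt.mpr hgt.le), if_pos hgt]
          ring_nf
      · have : w ∉ insert y t := by
          intro h'
          rcases Finset.mem_insert.mp h' with h' | h'
          · exact hyw h'.symm
          · exact hwt h'
        rw [gderiv, if_neg hyt, gmul_gen, if_neg this, mul_zero, gmul_gen, if_neg hwt, neg_zero]

lemma gderiv_gen (y w : ι) : gderiv y (gen w : Car ι) = if y = w then gone else 0 := by
  have : (gen w : Car ι) = gmul (gen w) gone := by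
    funext u
    rw [gmul]
    rw [Finset.sum_eq_single_of_mem u (Finset.mem_powerset_self u)
      (fun b hb hbne => by
        have : u \ b ≠ ∅ := fun h' =>
          hbne (Finset.eq_of_subset_of_card_le (Finset.mem_powerset.mp hb)
            (le_of_eq (by
              have := Finset.card_sdiff_add_card_eq_card (Finset.mem_powerset.mp hb)
              rw [h', Finset.card_empty, zero_add] at this
              exact this.symm)))
        rw [gone_eq]
        simp only [this, if_false, mul_zero])]
    rw [Finset.sdiff_self, gone_eq]
    simp [mulSign]
  rw [this, gderiv_gmul_gen, gderiv_gone, gmul_zero_right, sub_zero]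

lemma gmul_gen_gen_self (a : ι) (h : Car ι) : gmul (gen a) (gmul (gen a) h) = 0 := by
  funext t
  simp only [Pi.zero_apply]
  rw [gmul_gen]
  split
  · rw [gmul_gen, if_neg (Finset.notMem_erase a t), mul_zero]
  · rfl

lemma gmul_gen_gen_swap {a b : ι} (hab : a ≠ b) (h : Car ι) :
    gmul (gen a) (gmul (gen b) h) = - gmul (gen b) (gmul (gen a) h) := by
  funext t
  simp only [Pi.neg_apply]
  by_cases hat : a ∈ t <;> by_cases hbt : b ∈ t
  · have hab' : b ∈ t.erase a := Finset.mem_erase.mpr ⟨hab.symm, hbt⟩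
    have hba' : a ∈ t.erase b := Finset.mem_erase.mpr ⟨hab, hat⟩
    have hcomm : (t.erase a).erase b = (t.erase b).erase a := Finset.erase_right_comm
    rw [gmul_gen, if_pos hat, gmul_gen, if_pos hab', gmul_gen, if_pos hbt, gmul_gen,
      if_pos hba', hcomm]
    set s := (t.erase b).erase a with hs
    have h1 : t.erase a = insert b s := by
      rw [← hcomm]; exact (Finset.insert_erase hab').symm
    have h2 : t.erase b = insert a s := (Finset.insert_erase hba').symm
    have hbs : b ∉ s := fun h' => Finset.notMem_erase b t (Finset.mem_of_mem_erase h')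
    have has : a ∉ s := Finset.notMem_erase a _
    have e1 : ((t.erase a).filter (· < a)).card =
        (s.filter (· < a)).card + if b < a then 1 else 0 := by
      rw [h1]; exact card_filter_insert_lt hbs
    have e2 : ((t.erase b).filter (· < b)).card =
        (s.filter (· < b)).card + if a < b then 1 else 0 := by
      rw [h2]; exact card_filter_insert_lt has
    rw [e1, e2]
    rcases lt_or_gt_of_ne hab with hlt | hgt
    · rw [if_neg (not_lt.mpr hlt.le), if_pos hlt]
      ring_nf
    · rw [if_pos hgt, if_neg (not_lt.mpr hgt.le)]
      ring_nf
  · rw [gmul_gen, if_pos hat, gmul_gen,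
      if_neg (fun h' => hbt (Finset.mem_of_mem_erase h')), gmul_gen, if_neg hbt,
      mul_zero, neg_zero]
  · rw [gmul_gen, if_neg hat, gmul_gen, if_pos hbt, gmul_gen,
      if_neg (fun h' => hat (Finset.mem_of_mem_erase h')), mul_zero, neg_zero]
  · rw [gmul_gen, if_neg hat, gmul_gen, if_neg hbt, neg_zero]

end Grassmann
namespace Grassmann
variable {ι : Type} [LinearOrder ι]

lemma lprod_cons (f : Car ι) (l : List (Car ι)) : lprod (f :: l) = gmul f (lprod l) := rfl

lemma lprod_nil : lprod ([] : List (Car ι)) = gone := rfl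

section lin
variable [Fintype ι]

/-- A linear combination of generators. -/
def lin (c : ι → ℂ) : Car ι := ∑ y : ι, c y • gen y

lemma gmul_lin_left (c : ι → ℂ) (h : Car ι) :
    gmul (lin c) h = ∑ y : ι, c y • gmul (gen y) h := by
  rw [lin, gmul_sum_left]
  exact Finset.sum_congr rfl fun y _ => gmul_smul_left _ _ _

lemma lin_expand (c d : ι → ℂ) (h : Car ι) :
    gmul (lin c) (gmul (lin d) h) =
      ∑ y : ι, ∑ z : ι, c y • d z • gmul (gen y) (gmul (gen z) h) := by
  rw [gmul_lin_left]
  refine Finset.sum_congr rfl fun y _ => ?_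
  rw [gmul_lin_left, gmul_sum_right, Finset.smul_sum]
  exact Finset.sum_congr rfl fun z _ => by rw [gmul_smul_right]

lemma lin_term_swap (c d : ι → ℂ) (h : Car ι) (y z : ι) :
    c y • d z • gmul (gen y) (gmul (gen z) h) =
      -(d z • c y • gmul (gen z) (gmul (gen y) h)) := by
  by_cases hyz : y = z
  · subst hyz
    rw [gmul_gen_gen_self]
    simp
  · rw [gmul_gen_gen_swap hyz, smul_neg, smul_neg, smul_comm]

lemma gmul_lin_swap (c d : ι → ℂ) (h : Car ι) :
    gmul (lin c) (gmul (lin d) h) = - gmul (lin d) (gmul (lin c) h) := by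
  calc gmul (lin c) (gmul (lin d) h)
      = ∑ y : ι, ∑ z : ι, c y • d z • gmul (gen y) (gmul (gen z) h) := lin_expand c d h
    _ = ∑ y : ι, ∑ z : ι, -(d z • c y • gmul (gen z) (gmul (gen y) h)) :=
        Finset.sum_congr rfl fun y _ => Finset.sum_congr rfl fun z _ => lin_term_swap c d h y z
    _ = -∑ y : ι, ∑ z : ι, d z • c y • gmul (gen z) (gmul (gen y) h) := by
        simp [Finset.sum_neg_distrib]
    _ = -∑ z : ι, ∑ y : ι, d z • c y • gmul (gen z) (gmul (gen y) h) := by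
        rw [Finset.sum_comm]
    _ = - gmul (lin d) (gmul (lin c) h) := by rw [lin_expand d c h]

lemma gmul_lin_self (c : ι → ℂ) (h : Car ι) :
    gmul (lin c) (gmul (lin c) h) = 0 := by
  have h1 := gmul_lin_swap c c h
  funext t
  have h2 := congrFun h1 t
  simp only [Pi.neg_apply] at h2
  have h3 : gmul (lin c) (gmul (lin c) h) t + gmul (lin c) (gmul (lin c) h) t = 0 := by
    nth_rewrite 1 [h2]; ring
  exact add_self_eq_zero.mp h3

lemma lprod_lin_move (F : ι → ι → ℂ) (z : ι) (l₁ l₂ : List ι) :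
    lprod ((l₁ ++ z :: l₂).map (fun x => lin (F x))) =
      (-1 : ℂ) ^ l₁.length • gmul (lin (F z)) (lprod ((l₁ ++ l₂).map (fun x => lin (F x)))) := by
  induction l₁ with
  | nil => simp [lprod_cons]
  | cons a l₁ ih =>
    simp only [List.cons_append, List.map_cons, lprod_cons, ih, List.length_cons]
    rw [gmul_smul_right, gmul_lin_swap]
    simp only [pow_succ, mul_neg_one, neg_smul, smul_neg]

lemma gmul_lin_lprod_mem (F : ι → ι → ℂ) (z : ι) (l : List ι) (hz : z ∈ l) :
    gmul (lin (F z)) (lprod (l.map (fun x => lin (F x)))) = 0 := by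
  obtain ⟨l₁, l₂, rfl⟩ := List.append_of_mem hz
  rw [lprod_lin_move, gmul_smul_right, gmul_lin_self, smul_zero]

end lin

lemma exists_sort_split (z : ι) (t : Finset ι) (hz : z ∉ t) :
    ∃ l₁ l₂ : List ι, t.sort (· ≤ ·) = l₁ ++ l₂ ∧
      ((insert z t).sort (· ≤ ·)) = l₁ ++ z :: l₂ ∧
      l₁.length = (t.filter (· < z)).card := by
  obtain ⟨l₁, l₂, hL⟩ :=
    List.append_of_mem ((Finset.mem_sort (· ≤ ·)).mpr (Finset.mem_insert_self z t))
  have hsorted : (l₁ ++ z :: l₂).Pairwise (· < ·) := hL ▸ (Finset.sortedLT_sort _).pairwise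
  obtain ⟨s₁, s₂, hcross⟩ := List.pairwise_append.mp hsorted
  have hz2 : ∀ y ∈ l₂, z < y := (List.pairwise_cons.mp s₂).1
  have s₂' : l₂.Pairwise (· < ·) := (List.pairwise_cons.mp s₂).2
  have s₁₂ : (l₁ ++ l₂).Pairwise (· < ·) :=
    List.pairwise_append.mpr ⟨s₁, s₂', fun x hx y hy => hcross x hx y (List.mem_cons_of_mem z hy)⟩
  have hzl₁ : z ∉ l₁ := fun h' => lt_irrefl z (hcross z h' z (List.mem_cons_self))
  have hzl₂ : z ∉ l₂ := fun h' => lt_irrefl z (hz2 z h')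
  have hzA : z ∉ (l₁ ++ l₂).toFinset := by
    simp only [List.toFinset_append, Finset.mem_union, List.mem_toFinset]
    rintro (h' | h') <;> [exact hzl₁ h'; exact hzl₂ h']
  have htF : insert z ((l₁ ++ l₂).toFinset) = insert z t := by
    have h0 : (l₁ ++ z :: l₂).toFinset = insert z t := by
      rw [← hL]; exact Finset.sort_toFinset _ _
    rw [← h0]
    simp only [List.toFinset_append, List.toFinset_cons]
    rw [Finset.union_insert]
  have hA : (l₁ ++ l₂).toFinset = t := by
    rw [← Finset.erase_insert hzA, htF, Finset.erase_insert hz]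
  refine ⟨l₁, l₂, ?_, hL, ?_⟩
  · rw [← hA]
    exact (List.toFinset_sort (· ≤ ·) s₁₂.nodup).mpr (s₁₂.imp le_of_lt)
  · have hfil : t.filter (· < z) = l₁.toFinset := by
      ext x
      simp only [Finset.mem_filter, List.mem_toFinset]
      constructor
      · rintro ⟨hxt, hxz⟩
        rw [← hA] at hxt
        simp only [List.mem_toFinset, List.mem_append] at hxt
        rcases hxt with h' | h'
        · exact h'
        · exact absurd hxz (not_lt.mpr (hz2 x h').le)
      · intro hx
        refine ⟨?_, hcross x hx z (List.mem_cons_self)⟩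
        rw [← hA]
        simp only [List.mem_toFinset, List.mem_append]
        exact Or.inl hx
    rw [hfil, List.toFinset_card_of_nodup (s₁.nodup)]

end Grassmann
namespace Grassmann
variable {ι : Type} [LinearOrder ι]

/-- The delta basis element. -/
def dirac (s : Finset ι) : Car ι := fun t => if t = s then 1 else 0

lemma car_decomp [Fintype ι] (f : Car ι) : f = ∑ s : Finset ι, f s • dirac s := by
  funext t
  rw [Finset.sum_apply]
  rw [Finset.sum_eq_single_of_mem t (Finset.mem_univ t)
    (fun s _ hs => by simp [dirac, Ne.symm hs])]
  simp [dirac]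

lemma gmul_gone (f : Car ι) : gmul f gone = f := by
  funext u
  rw [gmul]
  rw [Finset.sum_eq_single_of_mem u (Finset.mem_powerset_self u)
    (fun b hb hbne => by
      have : u \ b ≠ ∅ := by
        intro h'
        apply hbne
        apply Finset.eq_of_subset_of_card_le (Finset.mem_powerset.mp hb)
        have := Finset.card_sdiff_add_card_eq_card (Finset.mem_powerset.mp hb)
        rw [h', Finset.card_empty, zero_add] at this
        exact le_of_eq this.symm
      rw [gone_eq]
      simp only [this, if_false, mul_zero])]
  rw [Finset.sdiff_self, gone_eq]
  simp [mulSign]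

lemma gderiv_dirac (x : ι) (s : Finset ι) :
    gderiv x (dirac s) =
      if x ∈ s then ((-1 : ℂ) ^ ((s.erase x).filter (· < x)).card) • dirac (s.erase x)
      else 0 := by
  funext t
  by_cases hxs : x ∈ s
  · rw [if_pos hxs]
    by_cases hxt : x ∈ t
    · have ht : t ≠ s.erase x := fun h' => (Finset.mem_erase.mp (h' ▸ hxt)).1 rfl
      rw [gderiv, if_pos hxt, Pi.smul_apply]
      simp only [dirac]
      rw [if_neg ht, smul_eq_mul, mul_zero]
    · rw [gderiv, if_neg hxt, Pi.smul_apply]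
      simp only [dirac]
      by_cases ht : t = s.erase x
      · rw [if_pos ht, if_pos (show insert x t = s by rw [ht]; exact Finset.insert_erase hxs),
          mul_one, smul_eq_mul, mul_one, ht]
      · rw [if_neg ht,
          if_neg (fun h' : insert x t = s => ht (by rw [← h', Finset.erase_insert hxt])),
          mul_zero, smul_eq_mul, mul_zero]
  · rw [if_neg hxs, Pi.zero_apply, gderiv]
    split
    · rfl
    · simp only [dirac]
      rw [if_neg (fun h' : insert x t = s => hxs (h' ▸ Finset.mem_insert_self x t)), mul_zero]

lemma lprod_sorted_gen (l : List ι) (hl : l.Pairwise (· < ·)) :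
    lprod (l.map gen) = dirac l.toFinset := by
  induction l with
  | nil =>
    funext t
    simp [lprod_nil, gone_eq, dirac]
    split_ifs <;> simp_all
  | cons z l ih =>
    have hzl : ∀ b ∈ l, z < b := (List.pairwise_cons.mp hl).1
    have hz : z ∉ l.toFinset := fun h' => lt_irrefl z (hzl z (List.mem_toFinset.mp h'))
    rw [List.map_cons, lprod_cons, ih (List.pairwise_cons.mp hl).2]
    funext t
    rw [gmul_gen, List.toFinset_cons]
    simp only [dirac]
    by_cases hzt : z ∈ t
    · rw [if_pos hzt]
      by_cases ht : t.erase z = l.toFinset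
      · have ht' : t = insert z l.toFinset := by rw [← ht, Finset.insert_erase hzt]
        rw [if_pos ht, if_pos ht', mul_one]
        have : (t.erase z).filter (· < z) = ∅ := by
          rw [ht]
          rw [Finset.filter_eq_empty_iff]
          exact fun {b} hb => not_lt.mpr (hzl b (List.mem_toFinset.mp hb)).le
        rw [this, Finset.card_empty, pow_zero]
      · rw [if_neg ht, mul_zero,
          if_neg (fun h' : t = insert z l.toFinset => ht (by rw [h', Finset.erase_insert hz]))]
    · rw [if_neg hzt,
        if_neg (fun h' : t = insert z l.toFinset => hzt (h' ▸ Finset.mem_insert_self z l.toFinset))]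

lemma dirac_sort (s : Finset ι) : lprod ((s.sort (· ≤ ·)).map gen) = dirac s := by
  rw [lprod_sorted_gen _ (Finset.sortedLT_sort s).pairwise, Finset.sort_toFinset]

lemma gmul_apply_empty (f h : Car ι) : gmul f h ∅ = f ∅ * h ∅ := by
  rw [gmul]
  simp [mulSign]

end Grassmann
namespace Grassmann
variable (M : Type) [Fintype M] [LinearOrder M] (U : Matrix (Idx M) (Idx M) ℂ)

lemma genImage_as_lin : genImage M U = fun x => lin (U x) := rfl

lemma subst_def (f : Car (Idx M)) :
    subst M U f = ∑ s : Finset (Idx M), f s • lprod ((s.sort (· ≤ ·)).map (genImage M U)) := rfl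

lemma subst_smul (c : ℂ) (f : Car (Idx M)) : subst M U (c • f) = c • subst M U f := by
  rw [subst_def, subst_def, Finset.smul_sum]
  exact Finset.sum_congr rfl fun s _ => by rw [Pi.smul_apply, smul_eq_mul, mul_smul]

lemma subst_zero : subst M U (0 : Car (Idx M)) = 0 := by
  rw [subst_def]
  simp

lemma subst_sub (f g : Car (Idx M)) : subst M U (f - g) = subst M U f - subst M U g := by
  rw [subst_def, subst_def, subst_def, ← Finset.sum_sub_distrib]
  exact Finset.sum_congr rfl fun s _ => by rw [Pi.sub_apply, sub_smul]

lemma subst_sum {α : Type*} (S : Finset α) (g : α → Car (Idx M)) :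
    subst M U (∑ i ∈ S, g i) = ∑ i ∈ S, subst M U (g i) := by
  simp only [subst_def, Finset.sum_apply, Finset.sum_smul]
  rw [Finset.sum_comm]

lemma subst_dirac (s : Finset (Idx M)) :
    subst M U (dirac s) = lprod ((s.sort (· ≤ ·)).map (genImage M U)) := by
  rw [subst_def]
  rw [Finset.sum_eq_single_of_mem s (Finset.mem_univ s)
    (fun b _ hb => by simp [dirac, hb])]
  simp [dirac]

lemma subst_gone : subst M U gone = gone := by
  have h := subst_dirac M U ∅
  rw [Finset.sort_empty, List.map_nil, lprod_nil] at h
  exact h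

lemma gmul_genImage_lprod_mem (z : Idx M) (s : Finset (Idx M)) (hz : z ∈ s) :
    gmul (genImage M U z) (lprod ((s.sort (· ≤ ·)).map (genImage M U))) = 0 := by
  rw [genImage_as_lin]
  exact gmul_lin_lprod_mem U z _ ((Finset.mem_sort _).mpr hz)

lemma lprod_sort_insert (z : Idx M) (t : Finset (Idx M)) (hz : z ∉ t) :
    lprod (((insert z t).sort (· ≤ ·)).map (genImage M U)) =
      ((-1 : ℂ) ^ (t.filter (· < z)).card) •
        gmul (genImage M U z) (lprod ((t.sort (· ≤ ·)).map (genImage M U))) := by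
  obtain ⟨l₁, l₂, h1, h2, h3⟩ := exists_sort_split z t hz
  rw [h2, h1, ← h3, genImage_as_lin]
  exact lprod_lin_move U z l₁ l₂

lemma subst_gmul_gen (z : Idx M) (g : Car (Idx M)) :
    subst M U (gmul (gen z) g) = gmul (genImage M U z) (subst M U g) := by
  rw [subst_def, subst_def, gmul_sum_right]
  have lhs_eq : ∀ s : Finset (Idx M),
      (gmul (gen z) g) s • lprod ((s.sort (· ≤ ·)).map (genImage M U)) =
      if z ∈ s then ((-1 : ℂ) ^ ((s.erase z).filter (· < z)).card * g (s.erase z)) •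
        lprod ((s.sort (· ≤ ·)).map (genImage M U)) else 0 := by
    intro s
    rw [gmul_gen]
    split
    · rfl
    · rw [zero_smul]
  have rhs_eq : ∀ t : Finset (Idx M),
      gmul (genImage M U z) (g t • lprod ((t.sort (· ≤ ·)).map (genImage M U))) =
      if z ∈ t then 0
      else g t • gmul (genImage M U z) (lprod ((t.sort (· ≤ ·)).map (genImage M U))) := by
    intro t
    rw [gmul_smul_right]
    split
    · rename_i h
      rw [gmul_genImage_lprod_mem M U z t h, smul_zero]
    · rfl
  rw [Finset.sum_congr rfl fun s _ => lhs_eq s, Finset.sum_congr rfl fun t _ => rhs_eq t]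
  rw [Finset.sum_ite, Finset.sum_const_zero, add_zero, Finset.sum_ite, Finset.sum_const_zero,
    zero_add]
  refine Finset.sum_bij' (fun s _ => s.erase z) (fun t _ => insert z t) ?_ ?_ ?_ ?_ ?_
  · intro s hs
    simp only [Finset.mem_filter, Finset.mem_univ, true_and] at hs ⊢
    exact Finset.notMem_erase z s
  · intro t ht
    simp only [Finset.mem_filter, Finset.mem_univ, true_and] at ht ⊢
    exact Finset.mem_insert_self z t
  · intro s hs
    simp only [Finset.mem_filter, Finset.mem_univ, true_and] at hs
    exact Finset.insert_erase hs
  · intro t ht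
    simp only [Finset.mem_filter, Finset.mem_univ, true_and] at ht
    exact Finset.erase_insert ht
  · intro s hs
    simp only [Finset.mem_filter, Finset.mem_univ, true_and] at hs
    have hz' : z ∉ s.erase z := Finset.notMem_erase z s
    have hQ : lprod ((s.sort (· ≤ ·)).map (genImage M U)) =
        ((-1 : ℂ) ^ (((s.erase z)).filter (· < z)).card) •
          gmul (genImage M U z) (lprod (((s.erase z).sort (· ≤ ·)).map (genImage M U))) := by
      conv_lhs => rw [← Finset.insert_erase hs]
      exact lprod_sort_insert M U z (s.erase z) hz'
    rw [hQ, smul_smul]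
    congr 1
    rw [mul_comm, ← mul_assoc, neg_one_pow_mul_self, one_mul]

lemma subst_lprod_gen (l : List (Idx M)) :
    subst M U (lprod (l.map gen)) = lprod (l.map (genImage M U)) := by
  induction l with
  | nil => exact subst_gone M U
  | cons z l ih =>
    rw [List.map_cons, List.map_cons, lprod_cons, lprod_cons, subst_gmul_gen, ih]

lemma newDeriv_def (x : Idx M) (f : Car (Idx M)) :
    newDeriv M U x f = ∑ y : Idx M, (starRingEnd ℂ) (U x y) • gderiv y f := rfl

lemma newDeriv_smul (x : Idx M) (c : ℂ) (f : Car (Idx M)) :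
    newDeriv M U x (c • f) = c • newDeriv M U x f := by
  rw [newDeriv_def, newDeriv_def, Finset.smul_sum]
  exact Finset.sum_congr rfl fun y _ => by rw [gderiv_smul, smul_comm]

lemma newDeriv_sum {α : Type*} (x : Idx M) (S : Finset α) (g : α → Car (Idx M)) :
    newDeriv M U x (∑ i ∈ S, g i) = ∑ i ∈ S, newDeriv M U x (g i) := by
  simp only [newDeriv_def, gderiv_sum, Finset.smul_sum]
  rw [Finset.sum_comm]

lemma newDeriv_sub (x : Idx M) (f g : Car (Idx M)) :
    newDeriv M U x (f - g) = newDeriv M U x f - newDeriv M U x g := by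
  simp only [newDeriv_def, gderiv_sub, smul_sub, Finset.sum_sub_distrib]

lemma newDeriv_gone (x : Idx M) : newDeriv M U x gone = 0 := by
  simp only [newDeriv_def, gderiv_gone, smul_zero, Finset.sum_const_zero]

lemma gmul_genImage_left (z : Idx M) (h : Car (Idx M)) :
    gmul (genImage M U z) h = ∑ w : Idx M, U z w • gmul (gen w) h := by
  rw [genImage_as_lin]
  exact gmul_lin_left (U z) h

lemma newDeriv_gmul_genImage (hU : U ∈ Matrix.unitaryGroup (Idx M) ℂ) (x z : Idx M)
    (h : Car (Idx M)) :
    newDeriv M U x (gmul (genImage M U z) h) =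
      (if x = z then h else 0) - gmul (genImage M U z) (newDeriv M U x h) := by
  rw [newDeriv_def, gmul_genImage_left]
  have step : ∀ y : Idx M,
      (starRingEnd ℂ) (U x y) • gderiv y (∑ w : Idx M, U z w • gmul (gen w) h) =
      ((starRingEnd ℂ) (U x y) * U z y) • h -
        (starRingEnd ℂ) (U x y) • gmul (genImage M U z) (gderiv y h) := by
    intro y
    rw [gderiv_sum]
    have inner : ∀ w : Idx M, gderiv y (U z w • gmul (gen w) h) =
        U z w • ((if y = w then h else 0) - gmul (gen w) (gderiv y h)) := by
      intro w
      rw [gderiv_smul, gderiv_gmul_gen]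
    rw [Finset.sum_congr rfl fun w _ => inner w]
    simp only [smul_sub, Finset.sum_sub_distrib]
    have e1 : ∑ w : Idx M, U z w • (if y = w then h else (0 : Car (Idx M))) = U z y • h := by
      rw [Finset.sum_congr rfl (fun w _ => by
        rw [show (U z w • if y = w then h else (0 : Car (Idx M))) =
          (if w = y then U z w • h else 0) from by
            rcases eq_or_ne w y with h' | h'
            · subst h'; rw [if_pos rfl, if_pos rfl]
            · rw [if_neg h', if_neg (Ne.symm h'), smul_zero]])]
      rw [Finset.sum_ite_eq' Finset.univ y (fun w => U z w • h), if_pos (Finset.mem_univ y)]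
    have e2 : ∑ w : Idx M, U z w • gmul (gen w) (gderiv y h) =
        gmul (genImage M U z) (gderiv y h) := (gmul_genImage_left M U z (gderiv y h)).symm
    rw [e1, e2, smul_smul]
  rw [Finset.sum_congr rfl fun y _ => step y, Finset.sum_sub_distrib]
  congr 1
  · have : ∑ y : Idx M, ((starRingEnd ℂ) (U x y) * U z y) • h =
        (∑ y : Idx M, U z y * (starRingEnd ℂ) (U x y)) • h := by
      rw [Finset.sum_smul]
      exact Finset.sum_congr rfl fun y _ => by rw [mul_comm]
    rw [this]
    have hUU : ∑ y : Idx M, U z y * (starRingEnd ℂ) (U x y) = if z = x then 1 else 0 := by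
      have h1 := Matrix.mem_unitaryGroup_iff.mp hU
      calc ∑ y : Idx M, U z y * (starRingEnd ℂ) (U x y)
          = ∑ y : Idx M, U z y * (star U) y x := by
            refine Finset.sum_congr rfl fun y _ => ?_
            rw [Matrix.star_apply, starRingEnd_apply]
        _ = (U * star U) z x := (Matrix.mul_apply).symm
        _ = (1 : Matrix (Idx M) (Idx M) ℂ) z x := by rw [h1]
        _ = if z = x then 1 else 0 := Matrix.one_apply
    rw [hUU]
    rcases eq_or_ne x z with h' | h'
    · subst h'; rw [if_pos rfl, if_pos rfl, one_smul]
    · rw [if_neg h', if_neg (Ne.symm h'), zero_smul]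
  · rw [newDeriv_def, gmul_sum_right]
    exact Finset.sum_congr rfl fun y _ => (gmul_smul_right _ _ _).symm

end Grassmann
namespace Grassmann
variable (M : Type) [Fintype M] [LinearOrder M] (U : Matrix (Idx M) (Idx M) ℂ)

lemma chain_list (hU : U ∈ Matrix.unitaryGroup (Idx M) ℂ) (x : Idx M) (l : List (Idx M)) :
    newDeriv M U x (lprod (l.map (genImage M U))) =
      subst M U (gderiv x (lprod (l.map gen))) := by
  induction l with
  | nil =>
    simp only [List.map_nil, lprod_nil, gderiv_gone, subst_zero, newDeriv_gone]
  | cons z l ih =>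
    rw [List.map_cons, List.map_cons, lprod_cons, lprod_cons,
      newDeriv_gmul_genImage M U hU x z, ih, gderiv_gmul_gen, subst_sub, subst_gmul_gen]
    congr 1
    rcases eq_or_ne x z with h' | h'
    · subst h'
      rw [if_pos rfl, if_pos rfl, subst_lprod_gen]
    · rw [if_neg h', if_neg h', subst_zero]

lemma chain (hU : U ∈ Matrix.unitaryGroup (Idx M) ℂ) (x : Idx M) (μ : Car (Idx M)) :
    newDeriv M U x (subst M U μ) = subst M U (gderiv x μ) := by
  conv_rhs => rw [car_decomp μ]
  rw [gderiv_sum, subst_sum, subst_def, newDeriv_sum]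
  refine Finset.sum_congr rfl fun s _ => ?_
  rw [newDeriv_smul, gderiv_smul, subst_smul]
  congr 1
  rw [chain_list M U hU x (s.sort (· ≤ ·)), dirac_sort]

lemma fold_chain (hU : U ∈ Matrix.unitaryGroup (Idx M) ℂ) (μ : Car (Idx M)) (l : List M) :
    l.foldr (fun i g => newDeriv M U (toLex (true, i)) (newDeriv M U (toLex (false, i)) g))
        (subst M U μ)
      = subst M U
          (l.foldr (fun i g => gderiv (toLex (true, i)) (gderiv (toLex (false, i)) g)) μ) := by
  induction l with
  | nil => rfl
  | cons a l ih =>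
    simp only [List.foldr_cons, ih]
    rw [chain M U hU, chain M U hU]

lemma genImage_empty (z : Idx M) : genImage M U z ∅ = 0 := by
  rw [genImage, Finset.sum_apply]
  refine Finset.sum_eq_zero fun y _ => ?_
  rw [Pi.smul_apply, smul_eq_mul, gen, if_neg (Ne.symm (Finset.singleton_ne_empty y)), mul_zero]

lemma subst_apply_empty (g : Car (Idx M)) : subst M U g ∅ = g ∅ := by
  rw [subst_def, Finset.sum_apply]
  rw [Finset.sum_eq_single_of_mem (∅ : Finset (Idx M)) (Finset.mem_univ _) ?_]
  · rw [Finset.sort_empty, List.map_nil, lprod_nil, Pi.smul_apply, smul_eq_mul, gone_eq]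
    simp
  · intro s _ hs
    have hne : s.sort (· ≤ ·) ≠ [] := by
      intro h
      apply hs
      rw [← Finset.sort_toFinset s (· ≤ ·), h, List.toFinset_nil]
    obtain ⟨z, l', heq⟩ := List.exists_cons_of_ne_nil hne
    rw [Pi.smul_apply, smul_eq_mul, heq, List.map_cons, lprod_cons, gmul_apply_empty,
      genImage_empty, zero_mul, mul_zero]

end Grassmann



open Grassmann in
/-- invariance of the Grassmann integral under a unitary change of
generators: the derivations `δ/δb = Ū δ/δa` satisfy `δ/δb_j b_i = δ_ij`, and the
integral of `μ(χ̄,χ)` with respect to the new generators equals the integral of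
`μ(ψ̄,ψ)` with respect to the old ones. -/
theorem statement1 (M : Type) [Fintype M] [LinearOrder M]
    (U : Matrix (Idx M) (Idx M) ℂ) (hU : U ∈ Matrix.unitaryGroup (Idx M) ℂ) :
    (∀ x x' : Idx M,
      newDeriv M U x (genImage M U x') = if x = x' then gone else 0) ∧
    (∀ μ : Car (Idx M), newIntegral M U (subst M U μ) = gintegral M μ) := by
  constructor
  · intro x x'
    have h1 : genImage M U x' = gmul (genImage M U x') gone := (gmul_gone _).symm
    rw [h1, newDeriv_gmul_genImage M U hU x x' gone, newDeriv_gone, gmul_zero_right, sub_zero]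
  · intro μ
    rw [newIntegral, fold_chain M U hU, subst_apply_empty, gintegral]
end
end

section
/- The normal-ordering map Θ is compatible with the involutions: for every bounded operator A on the fermion Fock space ∧H, Θ(A*) = (Θ(A))*. -/
open Finset Matrix
open scoped Classical ComplexOrder Kronecker

noncomputable section

namespace Grassmann

variable {ι κ : Type} [LinearOrder ι] [LinearOrder κ]

variable (M : Type) [Fintype M] [LinearOrder M]

/-! ### Auxiliary lemmas -/

section Aux

variable {ι : Type} [LinearOrder ι]

/-- Delta function: the basis monomial supported on `S` with coefficient `c`. -/
def dl (S : Finset ι) (c : ℂ) : Car ι := fun t => if t = S then c else 0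

lemma gone_eq_dl : (gone : Car ι) = dl ∅ 1 := rfl

lemma gen_eq_dl (x : ι) : (gen x : Car ι) = dl {x} 1 := rfl

lemma smul_dl (c : ℂ) (S : Finset ι) (a : ℂ) : c • dl S a = dl S (c * a) := by
  funext t
  simp only [dl, Pi.smul_apply, smul_eq_mul]
  split <;> simp

lemma gmul_dl (S T : Finset ι) (a b : ℂ) :
    gmul (dl S a) (dl T b) =
      if Disjoint S T then dl (S ∪ T) (mulSign S T * a * b) else 0 := by
  funext u
  have key : gmul (dl S a) (dl T b) u =
      if S ⊆ u ∧ u \ S = T then mulSign S T * a * b else 0 := by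
    unfold gmul dl
    by_cases hS : S ⊆ u
    · rw [Finset.sum_eq_single_of_mem S (Finset.mem_powerset.2 hS)]
      · by_cases hT : u \ S = T
        · simp [hS, hT, mul_assoc]
        · simp [hS, hT]
      · intro s hs hne
        simp [hne]
    · rw [Finset.sum_eq_zero]
      · simp [hS]
      · intro s hs
        have : s ≠ S := by
          rintro rfl; exact hS (Finset.mem_powerset.1 hs)
        simp [this]
  rw [key]
  by_cases hd : Disjoint S T
  · have hiff : (S ⊆ u ∧ u \ S = T) ↔ u = S ∪ T := by
      constructor
      · rintro ⟨h1, rfl⟩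
        exact (Finset.union_sdiff_of_subset h1).symm
      · rintro rfl
        exact ⟨Finset.subset_union_left, Finset.union_sdiff_cancel_left hd⟩
    simp only [hd, if_true, dl]
    rw [if_congr hiff rfl rfl]
  · have : ¬ (S ⊆ u ∧ u \ S = T) := by
      rintro ⟨h1, rfl⟩
      exact hd (Finset.disjoint_sdiff)
    simp [hd, this]

lemma mulSign_singleton (x : ι) (S : Finset ι) (h : ∀ y ∈ S, x < y) :
    mulSign {x} S = 1 := by
  unfold mulSign
  have : (({x} ×ˢ S).filter fun p => p.2 < p.1) = ∅ := by
    rw [Finset.filter_eq_empty_iff]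
    rintro ⟨p1, p2⟩ hp
    rw [Finset.mem_product, Finset.mem_singleton] at hp
    obtain ⟨rfl, hp2⟩ := hp
    exact not_lt_of_gt (h _ hp2)
  rw [this]; simp

lemma list_toFinset_map {α β : Type} [DecidableEq α] [DecidableEq β] (f : α → β)
    (l : List α) : (l.map f).toFinset = l.toFinset.image f := by
  ext x; simp

lemma lprod_gen_sorted (l : List ι) (h : l.Pairwise (· < ·)) :
    lprod (l.map gen) = dl l.toFinset 1 := by
  induction l with
  | nil => simpa [lprod] using gone_eq_dl
  | cons x t ih =>
    have ht : t.Pairwise (· < ·) := h.of_cons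
    have hx : ∀ y ∈ t.toFinset, x < y := by
      intro y hy
      exact List.rel_of_pairwise_cons h (List.mem_toFinset.1 hy)
    have hdisj : Disjoint ({x} : Finset ι) t.toFinset := by
      simp only [Finset.disjoint_singleton_left]
      intro hxt
      exact lt_irrefl x (hx x hxt)
    have : lprod ((x :: t).map gen) = gmul (gen x) (lprod (t.map gen)) := rfl
    rw [this, ih ht, gen_eq_dl, gmul_dl, if_pos hdisj,
      mulSign_singleton x _ (fun y hy => hx y hy)]
    rw [← Finset.insert_eq, List.toFinset_cons]
    simp

end Aux

section MLem

variable (M : Type) [Fintype M] [LinearOrder M]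

/-- Embedding of creator indices. -/
def ft (i : M) : Idx M := toLex (true, i)
/-- Embedding of annihilator indices. -/
def ff (i : M) : Idx M := toLex (false, i)

/-- The support of the normal monomial `Ψ̄_I Ψ_J`. -/
def bset (I J : Finset M) : Finset (Idx M) := I.image (ft M) ∪ J.image (ff M)

lemma ft_lt_ft {i j : M} : ft M i < ft M j ↔ i < j := by
  rw [ft, ft, Prod.Lex.lt_iff]; simp

lemma ff_lt_ff {i j : M} : ff M i < ff M j ↔ i < j := by
  rw [ff, ff, Prod.Lex.lt_iff]; simp

lemma ff_lt_ft (i j : M) : ff M i < ft M j := by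
  rw [ff, ft, Prod.Lex.lt_iff]; simp

lemma ft_injective : Function.Injective (ft M) := by
  intro a b h
  exact congrArg (fun z : Idx M => (ofLex z).2) h

lemma ff_injective : Function.Injective (ff M) := by
  intro a b h
  exact congrArg (fun z : Idx M => (ofLex z).2) h

lemma ft_ne_ff (i j : M) : ft M i ≠ ff M j := by
  intro h
  exact Bool.noConfusion (congrArg (fun z : Idx M => (ofLex z).1) h)

lemma bset_disjoint (I J : Finset M) :
    Disjoint (I.image (ft M)) (J.image (ff M)) := by
  rw [Finset.disjoint_left]
  rintro a ha hb
  obtain ⟨i, -, rfl⟩ := Finset.mem_image.1 ha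
  obtain ⟨j, -, hj⟩ := Finset.mem_image.1 hb
  exact ft_ne_ff M i j hj.symm

lemma psiProd_eq (J : Finset M) : psiProd M J = dl (J.image (ff M)) 1 := by
  have h1 : (msort M J).map (psi M) = (((msort M J).map (ff M)).map gen) := by
    rw [List.map_map]; rfl
  have h2 : ((msort M J).map (ff M)).Pairwise (· < ·) := by
    exact List.Pairwise.map _ (fun a b hab => (ff_lt_ff M).2 hab) (Finset.sortedLT_sort J).pairwise
  rw [psiProd, h1, lprod_gen_sorted _ h2, list_toFinset_map]
  congr 1
  rw [msort, Finset.sort_toFinset]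

lemma psibarProd_eq (I : Finset M) : psibarProd M I = dl (I.image (ft M)) 1 := by
  have h1 : (msort M I).map (psibar M) = (((msort M I).map (ft M)).map gen) := by
    rw [List.map_map]; rfl
  have h2 : ((msort M I).map (ft M)).Pairwise (· < ·) := by
    exact List.Pairwise.map _ (fun a b hab => (ft_lt_ft M).2 hab) (Finset.sortedLT_sort I).pairwise
  rw [psibarProd, h1, lprod_gen_sorted _ h2, list_toFinset_map]
  congr 1
  rw [msort, Finset.sort_toFinset]

lemma mulSign_bset (I J : Finset M) :
    mulSign (I.image (ft M)) (J.image (ff M)) = (-1) ^ (I.card * J.card) := by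
  unfold mulSign
  have : ((I.image (ft M) ×ˢ J.image (ff M)).filter fun p => p.2 < p.1) =
      I.image (ft M) ×ˢ J.image (ff M) := by
    rw [Finset.filter_eq_self]
    rintro ⟨p1, p2⟩ hp
    rw [Finset.mem_product] at hp
    obtain ⟨h1, h2⟩ := hp
    obtain ⟨i, -, rfl⟩ := Finset.mem_image.1 h1
    obtain ⟨j, -, rfl⟩ := Finset.mem_image.1 h2
    exact ff_lt_ft M j i
  rw [this, Finset.card_product, Finset.card_image_of_injective _ (ft_injective M),
    Finset.card_image_of_injective _ (ff_injective M)]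

lemma nmono_eq (I J : Finset M) :
    nmono M I J = dl (bset M I J) ((-1) ^ (I.card * J.card)) := by
  rw [nmono, psibarProd_eq, psiProd_eq, gmul_dl, if_pos (bset_disjoint M I J),
    mulSign_bset, bset]
  ring_nf

end MLem
section Invol

variable (M : Type) [Fintype M] [LinearOrder M]

lemma barSwap_ft (i : M) : barSwap M (ft M i) = ff M i := rfl

lemma barSwap_ff (i : M) : barSwap M (ff M i) = ft M i := rfl

lemma barSwap_invol : Function.Involutive (barSwap M) := by
  intro x
  simp [barSwap]

lemma image_barSwap_image (A : Finset (Idx M)) :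
    (A.image (barSwap M)).image (barSwap M) = A := by
  rw [Finset.image_image]
  have : barSwap M ∘ barSwap M = id := funext (barSwap_invol M)
  rw [this, Finset.image_id]

lemma image_barSwap_bset (I J : Finset M) :
    (bset M I J).image (barSwap M) = bset M J I := by
  rw [bset, Finset.image_union, Finset.image_image, Finset.image_image, bset,
    Finset.union_comm]
  rfl

lemma ginvol_dl (S : Finset (Idx M)) (c : ℂ) :
    ginvol M (dl S c) = dl (S.image (barSwap M)) (involSign M S * (starRingEnd ℂ) c) := by
  funext t
  by_cases h : t = S.image (barSwap M)
  · have h2 : t.image (barSwap M) = S := by rw [h, image_barSwap_image]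
    rw [h]
    simp [ginvol, dl, image_barSwap_image]
  · have h2 : t.image (barSwap M) ≠ S := by
      intro hc
      exact h (by rw [← hc, image_barSwap_image])
    simp [ginvol, dl, h, h2]

lemma card_filter_lt {α : Type} [LinearOrder α] (s : Finset α) :
    ((s ×ˢ s).filter fun p => p.1 < p.2).card = s.card.choose 2 := by
  classical
  have h1 : s.offDiag = ((s ×ˢ s).filter fun p => p.1 < p.2) ∪
      ((s ×ˢ s).filter fun p => p.2 < p.1) := by
    ext ⟨x, y⟩
    simp only [Finset.mem_offDiag, Finset.mem_union, Finset.mem_filter, Finset.mem_product]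
    constructor
    · rintro ⟨hx, hy, hne⟩
      rcases lt_or_gt_of_ne hne with h | h
      · exact Or.inl ⟨⟨hx, hy⟩, h⟩
      · exact Or.inr ⟨⟨hx, hy⟩, h⟩
    · rintro (⟨⟨hx, hy⟩, h⟩ | ⟨⟨hx, hy⟩, h⟩)
      · exact ⟨hx, hy, ne_of_lt h⟩
      · exact ⟨hx, hy, (ne_of_lt h).symm⟩
  have hdisj : Disjoint ((s ×ˢ s).filter fun p => p.1 < p.2)
      ((s ×ˢ s).filter fun p => p.2 < p.1) := by
    rw [Finset.disjoint_left]
    rintro ⟨x, y⟩ h1 h2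
    rw [Finset.mem_filter] at h1 h2
    exact lt_asymm h1.2 h2.2
  have himg : ((s ×ˢ s).filter fun p => p.1 < p.2).image Prod.swap =
      ((s ×ˢ s).filter fun p => p.2 < p.1) := by
    ext ⟨x, y⟩
    simp only [Finset.mem_image, Finset.mem_filter, Finset.mem_product]
    constructor
    · rintro ⟨⟨a, b⟩, ⟨⟨ha, hb⟩, hab⟩, hs⟩
      cases hs
      exact ⟨⟨hb, ha⟩, hab⟩
    · rintro ⟨⟨hx, hy⟩, h⟩
      exact ⟨(y, x), ⟨⟨hy, hx⟩, h⟩, rfl⟩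
  have hcards : ((s ×ˢ s).filter fun p => p.1 < p.2).card =
      ((s ×ˢ s).filter fun p => p.2 < p.1).card := by
    rw [← himg, Finset.card_image_of_injective _ Prod.swap_injective]
  have hoff := Finset.offDiag_card s
  rw [h1, Finset.card_union_of_disjoint hdisj, ← hcards] at hoff
  rw [Nat.choose_two_right]
  have hmul : s.card * (s.card - 1) = s.card * s.card - s.card := by
    cases s.card with
    | zero => simp
    | succ m =>
      have : (m + 1) * (m + 1) = (m + 1) * m + (m + 1) := by ring
      simp [this]
  rw [hmul]
  omega

lemma involSign_filter (I J : Finset M) :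
    ((bset M I J ×ˢ bset M I J).filter fun p =>
        p.1 < p.2 ∧ barSwap M p.1 < barSwap M p.2) =
      ((I.image (ft M) ×ˢ I.image (ft M)).filter fun p => p.1 < p.2) ∪
      ((J.image (ff M) ×ˢ J.image (ff M)).filter fun p => p.1 < p.2) := by
  ext ⟨x, y⟩
  simp only [Finset.mem_filter, Finset.mem_union, Finset.mem_product, bset,
    Finset.mem_union]
  constructor
  · rintro ⟨⟨hx, hy⟩, hlt, hswap⟩
    rcases hx with hx | hx <;> rcases hy with hy | hy
    · exact Or.inl ⟨⟨hx, hy⟩, hlt⟩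
    · obtain ⟨i, -, rfl⟩ := Finset.mem_image.1 hx
      obtain ⟨j, -, rfl⟩ := Finset.mem_image.1 hy
      exact absurd hlt (not_lt_of_gt (ff_lt_ft M j i))
    · obtain ⟨i, -, rfl⟩ := Finset.mem_image.1 hx
      obtain ⟨j, -, rfl⟩ := Finset.mem_image.1 hy
      rw [barSwap_ff, barSwap_ft] at hswap
      exact absurd hswap (not_lt_of_gt (ff_lt_ft M j i))
    · exact Or.inr ⟨⟨hx, hy⟩, hlt⟩
  · rintro (⟨⟨hx, hy⟩, hlt⟩ | ⟨⟨hx, hy⟩, hlt⟩)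
    · refine ⟨⟨Or.inl hx, Or.inl hy⟩, hlt, ?_⟩
      obtain ⟨i, -, rfl⟩ := Finset.mem_image.1 hx
      obtain ⟨j, -, rfl⟩ := Finset.mem_image.1 hy
      rw [barSwap_ft, barSwap_ft]
      exact (ff_lt_ff M).2 ((ft_lt_ft M).1 hlt)
    · refine ⟨⟨Or.inr hx, Or.inr hy⟩, hlt, ?_⟩
      obtain ⟨i, -, rfl⟩ := Finset.mem_image.1 hx
      obtain ⟨j, -, rfl⟩ := Finset.mem_image.1 hy
      rw [barSwap_ff, barSwap_ff]
      exact (ft_lt_ft M).2 ((ff_lt_ff M).1 hlt)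

lemma involSign_bset (I J : Finset M) :
    involSign M (bset M I J) = (-1) ^ (I.card.choose 2 + J.card.choose 2) := by
  unfold involSign
  have hdisj : Disjoint ((I.image (ft M) ×ˢ I.image (ft M)).filter fun p => p.1 < p.2)
      ((J.image (ff M) ×ˢ J.image (ff M)).filter fun p => p.1 < p.2) := by
    rw [Finset.disjoint_left]
    rintro ⟨x, y⟩ h1 h2
    rw [Finset.mem_filter, Finset.mem_product] at h1 h2
    exact (Finset.disjoint_left.1 (bset_disjoint M I J)) h1.1.1 h2.1.1
  rw [involSign_filter, Finset.card_union_of_disjoint hdisj, card_filter_lt,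
    card_filter_lt, Finset.card_image_of_injective _ (ft_injective M),
    Finset.card_image_of_injective _ (ff_injective M), pow_add]

lemma ginvol_nmono (I J : Finset M) :
    ginvol M (nmono M I J) =
      ((-1 : ℂ) ^ (I.card.choose 2 + J.card.choose 2)) • nmono M J I := by
  rw [nmono_eq, ginvol_dl, image_barSwap_bset, involSign_bset, nmono_eq, smul_dl]
  congr 1
  rw [map_pow, map_neg, RingHom.map_one, mul_comm J.card I.card]

end Invol
section Op

variable (M : Type) [Fintype M] [LinearOrder M]

lemma adjOp_eq (A : Fock M →ₗ[ℂ] Fock M) :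
    adjOp M A = Matrix.toLin' ((LinearMap.toMatrix' A)ᴴ) := by
  rw [adjOp, LinearMap.toMatrix_eq_toMatrix', Matrix.toLin_eq_toLin']

lemma adjOp_mul (A B : Fock M →ₗ[ℂ] Fock M) :
    adjOp M (A * B) = adjOp M B * adjOp M A := by
  rw [adjOp_eq, adjOp_eq, adjOp_eq, LinearMap.toMatrix'_mul, Matrix.conjTranspose_mul,
    Matrix.toLin'_mul]
  rfl

lemma adjOp_one : adjOp M 1 = 1 := by
  rw [adjOp_eq, LinearMap.toMatrix'_one, Matrix.conjTranspose_one, Matrix.toLin'_one]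
  rfl

lemma adjOp_add (A B : Fock M →ₗ[ℂ] Fock M) :
    adjOp M (A + B) = adjOp M A + adjOp M B := by
  rw [adjOp_eq, adjOp_eq, adjOp_eq, map_add, Matrix.conjTranspose_add, map_add]

lemma adjOp_zero : adjOp M 0 = 0 := by
  rw [adjOp_eq, map_zero, Matrix.conjTranspose_zero, map_zero]

lemma adjOp_smul (c : ℂ) (A : Fock M →ₗ[ℂ] Fock M) :
    adjOp M (c • A) = (starRingEnd ℂ) c • adjOp M A := by
  rw [adjOp_eq, adjOp_eq, _root_.map_smul, Matrix.conjTranspose_smul, _root_.map_smul]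
  rfl

lemma adjOp_neg (A : Fock M →ₗ[ℂ] Fock M) : adjOp M (-A) = -(adjOp M A) := by
  rw [show -A = (-1 : ℂ) • A from (neg_one_smul ℂ A).symm, adjOp_smul, map_neg,
    RingHom.map_one, neg_one_smul ℂ (adjOp M A)]

lemma adjOp_sum {α : Type*} (s : Finset α) (g : α → (Fock M →ₗ[ℂ] Fock M)) :
    adjOp M (∑ i ∈ s, g i) = ∑ i ∈ s, adjOp M (g i) := by
  classical
  induction s using Finset.induction_on with
  | empty => simpa using adjOp_zero M
  | insert _ _ h ih =>
    rw [Finset.sum_insert h, Finset.sum_insert h, adjOp_add, ih]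

lemma adjOp_apply (A : Fock M →ₗ[ℂ] Fock M) (f : Fock M) (s : Finset M) :
    adjOp M A f s =
      ∑ t : Finset M, star (A (fun u => if u = s then 1 else 0) t) * f t := by
  rw [adjOp_eq, Matrix.toLin'_apply]
  simp only [Matrix.mulVec, dotProduct, Matrix.conjTranspose_apply,
    LinearMap.toMatrix'_apply]
  rw [show (Pi.single s 1 : Fock M) = fun u => if u = s then 1 else 0 by
    funext u; simp [Pi.single_apply]]

lemma createL_apply (i : M) (f : Fock M) (s : Finset M) :
    createL M i f s = if i ∈ s then
      (-1) ^ (((s.erase i)).filter fun j => j < i).card * f (s.erase i) else 0 := rfl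

lemma annihL_apply (i : M) (f : Fock M) (s : Finset M) :
    annihL M i f s = if i ∈ s then 0 else
      (-1) ^ (s.filter fun j => j < i).card * f (insert i s) := rfl

lemma adjOp_createL (i : M) : adjOp M (createL M i) = annihL M i := by
  refine LinearMap.ext fun f => funext fun s => ?_
  rw [adjOp_apply, annihL_apply]
  by_cases hi : i ∈ s
  · rw [if_pos hi, Finset.sum_eq_zero]
    intro t _
    rw [createL_apply]
    by_cases hit : i ∈ t
    · by_cases he : t.erase i = s
      · exact absurd (he ▸ hi) (Finset.notMem_erase i t)
      · simp [hit, he]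
    · simp [hit]
  · rw [if_neg hi, Finset.sum_eq_single (insert i s)]
    · rw [createL_apply, if_pos (Finset.mem_insert_self i s), Finset.erase_insert hi,
        if_pos rfl, mul_one, star_pow, star_neg, star_one]
    · intro t _ hne
      rw [createL_apply]
      by_cases hit : i ∈ t
      · by_cases he : t.erase i = s
        · exact absurd (by rw [← he, Finset.insert_erase hit]) hne
        · simp [hit, he]
      · simp [hit]
    · intro h
      exact absurd (Finset.mem_univ _) h

lemma adjOp_annihL (i : M) : adjOp M (annihL M i) = createL M i := by
  refine LinearMap.ext fun f => funext fun s => ?_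
  rw [adjOp_apply, createL_apply]
  by_cases hi : i ∈ s
  · rw [if_pos hi, Finset.sum_eq_single (s.erase i)]
    · rw [annihL_apply, if_neg (Finset.notMem_erase i s), Finset.insert_erase hi,
        if_pos rfl, mul_one, star_pow, star_neg, star_one]
    · intro t _ hne
      rw [annihL_apply]
      by_cases hit : i ∈ t
      · simp [hit]
      · by_cases he : insert i t = s
        · exact absurd (by rw [← he, Finset.erase_insert hit]) hne
        · simp [hit, he]
    · intro h
      exact absurd (Finset.mem_univ _) h
  · rw [if_neg hi, Finset.sum_eq_zero]
    intro t _
    rw [annihL_apply]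
    by_cases hit : i ∈ t
    · simp [hit]
    · by_cases he : insert i t = s
      · exact absurd (he ▸ Finset.mem_insert_self i t) hi
      · simp [hit, he]

lemma annihL_anticomm {i j : M} (h : i ≠ j) :
    annihL M i * annihL M j = -(annihL M j * annihL M i) := by
  refine LinearMap.ext fun f => funext fun s => ?_
  simp only [Module.End.mul_apply, LinearMap.neg_apply, Pi.neg_apply, annihL_apply]
  by_cases hi : i ∈ s
  · have h1 : i ∈ insert j s := Finset.mem_insert_of_mem hi
    simp [hi, h1]
  · by_cases hj : j ∈ s
    · have h1 : j ∈ insert i s := Finset.mem_insert_of_mem hj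
      simp [hi, hj, h1]
    · have hii : i ∉ insert j s := by
        simp only [Finset.mem_insert]
        rintro (rfl | hc)
        exacts [h rfl, hi hc]
      have hjj : j ∉ insert i s := by
        simp only [Finset.mem_insert]
        rintro (rfl | hc)
        exacts [h rfl, hj hc]
      rw [if_neg hi, if_neg hj, if_neg hii, if_neg hjj, Finset.insert_comm]
      have hifilt : i ∉ s.filter fun k => k < j := fun hc => hi (Finset.mem_filter.1 hc).1
      have hjfilt : j ∉ s.filter fun k => k < i := fun hc => hj (Finset.mem_filter.1 hc).1
      rcases h.lt_or_gt with hlt | hlt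
      · rw [Finset.filter_insert, if_pos hlt, Finset.card_insert_of_notMem hifilt,
          Finset.filter_insert, if_neg (not_lt_of_gt hlt), pow_succ]
        ring
      · rw [Finset.filter_insert, if_neg (not_lt_of_gt hlt),
          Finset.filter_insert, if_pos hlt, Finset.card_insert_of_notMem hjfilt, pow_succ]
        ring

lemma createL_anticomm {i j : M} (h : i ≠ j) :
    createL M i * createL M j = -(createL M j * createL M i) := by
  have h0 := congrArg (adjOp M) (annihL_anticomm M h.symm)
  rw [adjOp_mul, adjOp_neg, adjOp_mul, adjOp_annihL, adjOp_annihL] at h0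
  exact h0

lemma prod_mul_anticomm (a : Fock M →ₗ[ℂ] Fock M) (u : List (Fock M →ₗ[ℂ] Fock M))
    (hu : ∀ b ∈ u, a * b = -(b * a)) :
    u.prod * a = ((-1 : ℂ) ^ u.length) • (a * u.prod) := by
  induction u with
  | nil => simp
  | cons x v ihv =>
    have hx := hu x List.mem_cons_self
    have hv := fun b hb => hu b (List.mem_cons_of_mem x hb)
    rw [List.prod_cons, mul_assoc, ihv hv, mul_smul_comm, ← mul_assoc,
      show x * a = -(a * x) from by rw [hx, neg_neg],
      List.length_cons, pow_succ, _root_.neg_mul (a * x) v.prod, smul_neg, mul_assoc,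
      mul_smul, neg_one_smul, smul_neg]

lemma prod_reverse_anticomm (l : List (Fock M →ₗ[ℂ] Fock M))
    (h : l.Pairwise fun a b => a * b = -(b * a)) :
    l.reverse.prod = ((-1 : ℂ) ^ (l.length.choose 2)) • l.prod := by
  induction l with
  | nil => simp
  | cons a t ih =>
    obtain ⟨ha, ht⟩ := List.pairwise_cons.1 h
    rw [List.reverse_cons, List.prod_append, List.prod_cons, List.prod_nil, mul_one,
      ih ht, smul_mul_assoc, prod_mul_anticomm M a t ha, List.prod_cons,
      List.length_cons, smul_smul, ← pow_add]
    congr 2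
    have h2 : (t.length + 1).choose 2 = t.length.choose 2 + t.length := by
      have := Nat.choose_succ_succ t.length 1
      simpa [Nat.choose_one_right, Nat.add_comm] using this
    exact h2.symm

lemma adjOp_list_prod (l : List (Fock M →ₗ[ℂ] Fock M)) :
    adjOp M l.prod = ((l.map (adjOp M)).reverse).prod := by
  induction l with
  | nil => simpa using adjOp_one M
  | cons a t ih =>
    rw [List.prod_cons, adjOp_mul, ih, List.map_cons, List.reverse_cons,
      List.prod_append, List.prod_cons, List.prod_nil, mul_one]

lemma pairwise_anticomm_annih (I : Finset M) :
    ((msort M I).map (annihL M)).Pairwise fun a b => a * b = -(b * a) := by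
  exact List.Pairwise.map (annihL M) (fun a b hab => annihL_anticomm M (ne_of_lt hab))
    (Finset.sortedLT_sort I).pairwise

lemma pairwise_anticomm_create (I : Finset M) :
    ((msort M I).map (createL M)).Pairwise fun a b => a * b = -(b * a) := by
  exact List.Pairwise.map (createL M) (fun a b hab => createL_anticomm M (ne_of_lt hab))
    (Finset.sortedLT_sort I).pairwise

lemma adjOp_cOp (I J : Finset M) :
    adjOp M (cOp M I J) =
      ((-1 : ℂ) ^ (I.card.choose 2 + J.card.choose 2)) • cOp M J I := by
  have hmapI : ((msort M I).map (createL M)).map (adjOp M) = (msort M I).map (annihL M) := by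
    rw [List.map_map]
    exact congrArg (fun g => List.map g (msort M I)) (funext (adjOp_createL M))
  have hmapJ : ((msort M J).map (annihL M)).map (adjOp M) = (msort M J).map (createL M) := by
    rw [List.map_map]
    exact congrArg (fun g => List.map g (msort M J)) (funext (adjOp_annihL M))
  have hI : adjOp M ((msort M I).map (createL M)).prod
      = ((-1 : ℂ) ^ (I.card.choose 2)) • ((msort M I).map (annihL M)).prod := by
    rw [adjOp_list_prod, hmapI, prod_reverse_anticomm M _ (pairwise_anticomm_annih M I),
      List.length_map, msort, Finset.length_sort]
  have hJ : adjOp M ((msort M J).map (annihL M)).prod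
      = ((-1 : ℂ) ^ (J.card.choose 2)) • ((msort M J).map (createL M)).prod := by
    rw [adjOp_list_prod, hmapJ, prod_reverse_anticomm M _ (pairwise_anticomm_create M J),
      List.length_map, msort, Finset.length_sort]
  rw [cOp, adjOp_mul, hI, hJ, cOp, smul_mul_assoc, mul_smul_comm, smul_smul, ← pow_add,
    Nat.add_comm (J.card.choose 2)]

end Op
section Assemble

lemma sum_dl {ι : Type} [LinearOrder ι] [Fintype ι] (g : Car ι) :
    ∑ S : Finset ι, dl S (g S) = g := by
  funext t
  rw [Finset.sum_apply]
  simp [dl, Finset.sum_ite_eq]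

variable (M : Type) [Fintype M] [LinearOrder M]

/-- The creator part of a monomial index set. -/
def Iof (S : Finset (Idx M)) : Finset M := Finset.univ.filter fun i => ft M i ∈ S
/-- The annihilator part of a monomial index set. -/
def Jof (S : Finset (Idx M)) : Finset M := Finset.univ.filter fun j => ff M j ∈ S

lemma bset_Iof_Jof (S : Finset (Idx M)) : bset M (Iof M S) (Jof M S) = S := by
  ext x
  rw [bset, Finset.mem_union]
  constructor
  · rintro (hx | hx)
    · obtain ⟨i, hi, rfl⟩ := Finset.mem_image.1 hx
      exact (Finset.mem_filter.1 hi).2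
    · obtain ⟨j, hj, rfl⟩ := Finset.mem_image.1 hx
      exact (Finset.mem_filter.1 hj).2
  · intro hx
    have hxe : toLex ((ofLex x).1, (ofLex x).2) = x := by simp
    cases hb : (ofLex x).1
    · have hffx : ff M (ofLex x).2 = x := by rw [ff, ← hb, hxe]
      right
      exact Finset.mem_image.2 ⟨(ofLex x).2,
        Finset.mem_filter.2 ⟨Finset.mem_univ _, hffx ▸ hx⟩, hffx⟩
    · have hftx : ft M (ofLex x).2 = x := by rw [ft, ← hb, hxe]
      left
      exact Finset.mem_image.2 ⟨(ofLex x).2,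
        Finset.mem_filter.2 ⟨Finset.mem_univ _, hftx ▸ hx⟩, hftx⟩

lemma ginvol_smul (c : ℂ) (f : Car (Idx M)) :
    ginvol M (c • f) = (starRingEnd ℂ) c • ginvol M f := by
  funext t
  simp only [ginvol, Pi.smul_apply, smul_eq_mul, RingHom.map_mul]
  ring

lemma ginvol_sum {α : Type*} (s : Finset α) (g : α → Car (Idx M)) :
    ginvol M (∑ i ∈ s, g i) = ∑ i ∈ s, ginvol M (g i) := by
  funext t
  simp only [ginvol, Finset.sum_apply, map_sum, Finset.mul_sum]

end Assemble
end Grassmann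
open Grassmann in
/-- the normal-ordering map `Θ` is compatible with the involutions:
`Θ(A*) = (Θ(A))*` for every operator `A` on the fermion Fock space. -/
theorem statement9 (M : Type) [Fintype M] [LinearOrder M]
    (Θ : (Fock M →ₗ[ℂ] Fock M) → Car (Idx M))
    (hlin : IsLinearMap ℂ Θ) (hbij : Function.Bijective Θ)
    (hmono : ∀ I J : Finset M, Θ (cOp M I J) = nmono M I J)
    (A : Fock M →ₗ[ℂ] Fock M) :
    Θ (adjOp M A) = ginvol M (Θ A) := by
  classical
  have hΘ0 : Θ 0 = 0 := hlin.map_zero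
  have hΘsum : ∀ (g : Finset (Idx M) → (Fock M →ₗ[ℂ] Fock M)),
      Θ (∑ S : Finset (Idx M), g S) = ∑ S : Finset (Idx M), Θ (g S) := by
    intro g
    have : ∀ (s : Finset (Finset (Idx M))),
        Θ (∑ S ∈ s, g S) = ∑ S ∈ s, Θ (g S) := by
      intro s
      induction s using Finset.induction_on with
      | empty => simpa using hΘ0
      | insert _ _ h ih => rw [Finset.sum_insert h, Finset.sum_insert h, hlin.map_add, ih]
    exact this _
  set c : Finset (Idx M) → ℂ := fun S =>
    (-1 : ℂ) ^ ((Iof M S).card * (Jof M S).card) * Θ A S with hc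
  have hterm : ∀ S : Finset (Idx M),
      c S • nmono M (Iof M S) (Jof M S) = dl S (Θ A S) := by
    intro S
    rw [nmono_eq, bset_Iof_Jof, smul_dl, hc]
    refine congrArg (dl S) ?_
    show ((-1 : ℂ) ^ ((Iof M S).card * (Jof M S).card) * Θ A S) *
        (-1 : ℂ) ^ ((Iof M S).card * (Jof M S).card) = Θ A S
    have h1 : ((-1 : ℂ)) ^ ((Iof M S).card * (Jof M S).card) *
        ((-1 : ℂ)) ^ ((Iof M S).card * (Jof M S).card) = 1 := by
      rw [← mul_pow]; norm_num
    calc ((-1 : ℂ) ^ ((Iof M S).card * (Jof M S).card) * Θ A S) *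
          (-1 : ℂ) ^ ((Iof M S).card * (Jof M S).card)
        = ((-1 : ℂ) ^ ((Iof M S).card * (Jof M S).card) *
            (-1 : ℂ) ^ ((Iof M S).card * (Jof M S).card)) * Θ A S := by ring
      _ = Θ A S := by rw [h1, one_mul]
  have hsum : Θ (∑ S : Finset (Idx M), c S • cOp M (Iof M S) (Jof M S)) = Θ A := by
    rw [hΘsum]
    have h2 : ∀ S ∈ (Finset.univ : Finset (Finset (Idx M))),
        Θ (c S • cOp M (Iof M S) (Jof M S)) = dl S (Θ A S) := by
      intro S _
      rw [hlin.map_smul, hmono, hterm]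
    rw [Finset.sum_congr rfl h2, sum_dl]
  have hA : A = ∑ S : Finset (Idx M), c S • cOp M (Iof M S) (Jof M S) :=
    (hbij.injective hsum).symm
  calc Θ (adjOp M A)
      = Θ (adjOp M (∑ S : Finset (Idx M), c S • cOp M (Iof M S) (Jof M S))) := by
        rw [← hA]
    _ = Θ (∑ S : Finset (Idx M),
          (starRingEnd ℂ) (c S) • adjOp M (cOp M (Iof M S) (Jof M S))) := by
        rw [adjOp_sum]
        exact congrArg Θ (Finset.sum_congr rfl fun S _ => adjOp_smul M (c S) _)
    _ = ∑ S : Finset (Idx M),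
          (starRingEnd ℂ) (c S) • Θ (adjOp M (cOp M (Iof M S) (Jof M S))) := by
        rw [hΘsum]
        exact Finset.sum_congr rfl fun S _ => hlin.map_smul _ _
    _ = ∑ S : Finset (Idx M),
          (starRingEnd ℂ) (c S) • ginvol M (nmono M (Iof M S) (Jof M S)) := by
        refine Finset.sum_congr rfl fun S _ => ?_
        congr 1
        rw [adjOp_cOp, hlin.map_smul, hmono, ginvol_nmono]
    _ = ginvol M (∑ S : Finset (Idx M), c S • nmono M (Iof M S) (Jof M S)) := by
        rw [ginvol_sum]
        exact Finset.sum_congr rfl fun S _ => (ginvol_smul M _ _).symm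
    _ = ginvol M (Θ A) := by
        congr 1
        rw [Finset.sum_congr rfl fun S _ => hterm S, sum_dl]
end
end
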